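/- Let n ≥ 2, H ∈ ℝ, λ ∈ ℝ, p ∈ ℝ with p ≠ 1, R > 0 and δ ∈ ℝ. Assume λR^{p−1} > H² and set ω := √(λR^{p−1} − H²). Then the curve Y : [0,∞) → ℝⁿ defined by Y¹(t) = R·cos(ωt + δ), Y²(t) = R·sin(ωt + δ), Y³ = ⋯ = Yⁿ = 0 satisfies |Y(t)| = R for all t and solves D_t²Y(t) − H²Y(t) + λ|Y(t)|^{p−1}Y(t) = 0 on [0,∞). -/

import Mathlib

open Set

/-- Rotating exact solutions of `D_t²Y - H²Y + λ|Y|^{p-1}Y = 0` in the de Sitter spacetime: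
if `λR^{p-1} > H²` and `ω = √(λR^{p-1} - H²)`, the curve
`Y(t) = (R cos(ωt+δ), R sin(ωt+δ), 0, …, 0)` has constant norm `R` and solves the equation
on `[0, ∞)`. -/
theorem stmt_9 (n : ℕ) (hn : 2 ≤ n) (H lam p R δ : ℝ)
    (hp : p ≠ 1) (hR : 0 < R) (hω : H ^ 2 < lam * R ^ (p - 1))
    (Y : ℝ → EuclideanSpace ℝ (Fin n))
    (hY : ∀ t : ℝ, ∀ i : Fin n,
      Y t i = if (i : ℕ) = 0 then R * Real.cos (Real.sqrt (lam * R ^ (p - 1) - H ^ 2) * t + δ)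
        else if (i : ℕ) = 1 then R * Real.sin (Real.sqrt (lam * R ^ (p - 1) - H ^ 2) * t + δ)
        else 0) :
    (∀ t : ℝ, ‖Y t‖ = R) ∧
    ∃ Y' : ℝ → EuclideanSpace ℝ (Fin n),
      (∀ t ∈ Ici (0 : ℝ), HasDerivWithinAt Y (Y' t) (Ici (0 : ℝ)) t) ∧
      (∀ t ∈ Ici (0 : ℝ), HasDerivWithinAt Y'
        (H ^ 2 • Y t - (lam * ‖Y t‖ ^ (p - 1)) • Y t) (Ici (0 : ℝ)) t) := by
  set ω : ℝ := Real.sqrt (lam * R ^ (p - 1) - H ^ 2) with hωdef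
  have hpos : (0 : ℝ) < lam * R ^ (p - 1) - H ^ 2 := by linarith
  have hω2 : ω * ω = lam * R ^ (p - 1) - H ^ 2 := Real.mul_self_sqrt hpos.le
  set v : EuclideanSpace ℝ (Fin n) := WithLp.toLp 2 (fun i : Fin n => if (i : ℕ) = 0 then R else 0) with hv
  set w : EuclideanSpace ℝ (Fin n) := WithLp.toLp 2 (fun i : Fin n => if (i : ℕ) = 1 then R else 0) with hw
  have hvw : ∀ t, Y t = Real.cos (ω * t + δ) • v + Real.sin (ω * t + δ) • w := by
    intro t
    ext i
    have := hY t i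
    simp only [PiLp.add_apply, PiLp.smul_apply, smul_eq_mul, hv, hw, PiLp.toLp_apply, this]
    split_ifs with h1 h2
    · exfalso; omega
    · ring
    · ring
    · ring
  -- indices
  have i0 : Fin n := ⟨0, by omega⟩
  have i1 : Fin n := ⟨1, by omega⟩
  -- norm
  have hnorm : ∀ t, ‖Y t‖ = R := by
    intro t
    have : ‖Y t‖ = Real.sqrt (∑ i, ‖Y t i‖ ^ 2) := EuclideanSpace.norm_eq (Y t)
    rw [this]
    have hsum : (∑ i, ‖Y t i‖ ^ 2) =
        ∑ i ∈ ({(⟨0, by omega⟩ : Fin n), ⟨1, by omega⟩} : Finset (Fin n)), ‖Y t i‖ ^ 2 := by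
      refine (Finset.sum_subset (Finset.subset_univ _) ?_).symm
      intro x _ hx
      simp only [Finset.mem_insert, Finset.mem_singleton] at hx
      push_neg at hx
      have h0 : (x : ℕ) ≠ 0 := fun h => hx.1 (Fin.ext h)
      have h1 : (x : ℕ) ≠ 1 := fun h => hx.2 (Fin.ext h)
      rw [hY t x, if_neg h0, if_neg h1]
      simp
    rw [hsum, Finset.sum_pair (by simp [Fin.ext_iff])]
    rw [hY t ⟨0, by omega⟩, hY t ⟨1, by omega⟩]
    simp only [Fin.val_mk, if_true, if_neg one_ne_zero, if_pos rfl]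
    rw [Real.norm_eq_abs, Real.norm_eq_abs, sq_abs, sq_abs]
    have : (R * Real.cos (ω * t + δ)) ^ 2 + (R * Real.sin (ω * t + δ)) ^ 2 = R ^ 2 := by
      have := Real.sin_sq_add_cos_sq (ω * t + δ)
      nlinarith [this]
    rw [this, Real.sqrt_sq hR.le]
  -- derivatives
  have hθ : ∀ t : ℝ, HasDerivAt (fun s => ω * s + δ) ω t := by
    intro t
    simpa using ((hasDerivAt_id t).const_mul ω).add_const δ
  have hc : ∀ t : ℝ, HasDerivAt (fun s => Real.cos (ω * s + δ))
      (-Real.sin (ω * t + δ) * ω) t := fun t => (Real.hasDerivAt_cos _).comp t (hθ t)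
  have hs : ∀ t : ℝ, HasDerivAt (fun s => Real.sin (ω * s + δ))
      (Real.cos (ω * t + δ) * ω) t := fun t => (Real.hasDerivAt_sin _).comp t (hθ t)
  set Y' : ℝ → EuclideanSpace ℝ (Fin n) :=
    fun t => (-Real.sin (ω * t + δ) * ω) • v + (Real.cos (ω * t + δ) * ω) • w with hY'
  have hder : ∀ t : ℝ, HasDerivAt Y (Y' t) t := by
    intro t
    have hYe : Y = fun s => Real.cos (ω * s + δ) • v + Real.sin (ω * s + δ) • w := funext hvw
    rw [hYe]
    exact ((hc t).smul_const v).add ((hs t).smul_const w)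
  have hder2 : ∀ t : ℝ, HasDerivAt Y'
      ((-Real.cos (ω * t + δ) * ω * ω) • v + (-Real.sin (ω * t + δ) * ω * ω) • w) t := by
    intro t
    have h1 : HasDerivAt (fun s => -Real.sin (ω * s + δ) * ω)
        (-Real.cos (ω * t + δ) * ω * ω) t := by
      have := ((hs t).neg).mul_const ω
      simpa [mul_comm, mul_assoc, mul_left_comm, neg_mul] using this
    have h2 : HasDerivAt (fun s => Real.cos (ω * s + δ) * ω)
        (-Real.sin (ω * t + δ) * ω * ω) t := by
      have := (hc t).mul_const ω
      simpa [mul_comm, mul_assoc, mul_left_comm, neg_mul] using this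
    exact (h1.smul_const v).add (h2.smul_const w)
  have key : ∀ t : ℝ,
      (-Real.cos (ω * t + δ) * ω * ω) • v + (-Real.sin (ω * t + δ) * ω * ω) • w
        = H ^ 2 • Y t - (lam * R ^ (p - 1)) • Y t := by
    intro t
    rw [hvw t, show H ^ 2 = lam * R ^ (p - 1) - ω * ω from by rw [hω2]; ring]
    module
  refine ⟨hnorm, Y', fun t _ => (hder t).hasDerivWithinAt, fun t _ => ?_⟩
  rw [hnorm t, ← key t]
  exact (hder2 t).hasDerivWithinAt
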